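/- Let P(x) = Σ_{i=0}^m a_i x^i be a polynomial of degree m with nonnegative coefficients, let d > 0, and write P(x+d) = Σ_{j=0}^m b_j x^j, so b_j = Σ_{i=j}^m a_i d^{i-j} C(i,j). Then b_{m̄} ≥ b_{m̄+1} ≥ ⋯ ≥ b_m, where m̄ = ⌈(m−d)/(d+1)⌉. -/

import Mathlib

open Finset

/-- The coefficients of `P(x+d)` where `P(x) = ∑_{i=0}^m a i * x^i`:
`b j = ∑_{i=j}^m a i * d^(i-j) * C(i,j)`. -/
noncomputable def shiftCoeff (a : ℕ → ℝ) (m : ℕ) (d : ℝ) (j : ℕ) : ℝ :=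
  ∑ i ∈ Finset.Icc j m, a i * d ^ (i - j) * (i.choose j : ℝ)

/-- `t` is a mode of the finite sequence `b 0, b 1, …, b m`, i.e.
`b 0 ≤ ⋯ ≤ b t ≥ ⋯ ≥ b m`. -/
def IsMode (b : ℕ → ℝ) (m t : ℕ) : Prop :=
  t ≤ m ∧ (∀ i, i < t → b i ≤ b (i + 1)) ∧ (∀ i, t ≤ i → i < m → b (i + 1) ≤ b i)

/-- `m̄(d) = ⌈(m - d)/(d + 1)⌉` (a nonnegative integer since `(m-d)/(d+1) > -1`). -/
noncomputable def mbar (m : ℕ) (d : ℝ) : ℕ := (⌈((m : ℝ) - d) / (d + 1)⌉).toNat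

/-- The coefficients of `Q_m(x+d)` where `Q_m(x) = ∑_{i=0}^m x^i`:
`d_j = ∑_{i=j}^m d^(i-j) * C(i,j)`. -/
noncomputable def qCoeff (m : ℕ) (d : ℝ) (j : ℕ) : ℝ :=
  ∑ i ∈ Finset.Icc j m, d ^ (i - j) * (i.choose j : ℝ)

/-- first part of Lemma 2.2.  If `P(x) = ∑ a_i x^i` has degree `m`,
nonnegative coefficients, and `d > 0`, then the coefficients `b_j` of `P(x+d)`
satisfy `b_{m̄} ≥ b_{m̄+1} ≥ ⋯ ≥ b_m` where `m̄ = ⌈(m-d)/(d+1)⌉`. -/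
theorem stmt_2 (m : ℕ) (hm : 0 < m) (a : ℕ → ℝ) (d : ℝ) (hd : 0 < d)
    (hnonneg : ∀ i, i ≤ m → 0 ≤ a i) (hdeg : a m ≠ 0) :
    ∀ j, mbar m d ≤ j → j < m →
      shiftCoeff a m d (j + 1) ≤ shiftCoeff a m d j := by
  intro j hj hjm
  -- From j ≥ m̄ ≥ (m-d)/(d+1) we get m - d ≤ j*(d+1)
  have hd1 : (0:ℝ) < d + 1 := by linarith
  have hjd : (m : ℝ) - d ≤ (j : ℝ) * (d + 1) := by
    have h1 : ((m : ℝ) - d) / (d + 1) ≤ (j : ℝ) := by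
      have hle := Int.le_ceil (((m : ℝ) - d) / (d + 1))
      have h2 : (⌈((m : ℝ) - d) / (d + 1)⌉ : ℝ) ≤ ((mbar m d : ℕ) : ℝ) := by
        have := Int.self_le_toNat ⌈((m : ℝ) - d) / (d + 1)⌉
        unfold mbar
        exact_mod_cast this
      have h3 : ((mbar m d : ℕ) : ℝ) ≤ (j : ℝ) := by exact_mod_cast hj
      linarith
    calc (m : ℝ) - d = ((m : ℝ) - d) / (d + 1) * (d + 1) := by field_simp
      _ ≤ (j : ℝ) * (d + 1) := by
          apply mul_le_mul_of_nonneg_right h1 (le_of_lt hd1)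
  -- termwise inequality on Icc (j+1) m
  have key : ∀ i ∈ Finset.Icc (j+1) m,
      a i * d ^ (i - (j+1)) * (i.choose (j+1) : ℝ) ≤ a i * d ^ (i - j) * (i.choose j : ℝ) := by
    intro i hi
    simp only [Finset.mem_Icc] at hi
    obtain ⟨hij, him⟩ := hi
    have ha : 0 ≤ a i := hnonneg i him
    have hpow : d ^ (i - j) = d * d ^ (i - (j+1)) := by
      rw [← pow_succ']
      congr 1
      omega
    have hch : (i.choose (j+1) : ℝ) * ((j:ℝ)+1) = (i.choose j : ℝ) * ((i - j : ℕ) : ℝ) := by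
      exact_mod_cast congrArg (Nat.cast : ℕ → ℝ) (Nat.choose_succ_right_eq i j)
    have hbound : ((i - j : ℕ) : ℝ) ≤ d * ((j:ℝ) + 1) := by
      have h4 : ((i - j : ℕ) : ℝ) = (i:ℝ) - (j:ℝ) := by
        push_cast [Nat.cast_sub (by omega : j ≤ i)]
        ring
      have h5 : (i:ℝ) ≤ (m:ℝ) := by exact_mod_cast him
      rw [h4]; nlinarith
    have hc0 : (0:ℝ) ≤ (i.choose j : ℝ) := by positivity
    have hcle : (i.choose (j+1) : ℝ) ≤ d * (i.choose j : ℝ) := by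
      have hj1 : (0:ℝ) < (j:ℝ) + 1 := by positivity
      rw [← mul_le_mul_iff_of_pos_right hj1, hch]
      nlinarith
    have hp0 : (0:ℝ) ≤ d ^ (i - (j+1)) := by positivity
    rw [hpow]
    nlinarith [mul_nonneg ha hp0, mul_le_mul_of_nonneg_left hcle (mul_nonneg ha hp0)]
  -- now sum up
  unfold shiftCoeff
  have hsplit : Finset.Icc j m = Finset.cons j (Finset.Icc (j+1) m) (by simp) := by
    rw [Finset.cons_eq_insert]
    ext x
    simp only [Finset.mem_Icc, Finset.mem_insert]
    omega
  calc ∑ i ∈ Finset.Icc (j+1) m, a i * d ^ (i - (j+1)) * (i.choose (j+1) : ℝ)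
      ≤ ∑ i ∈ Finset.Icc (j+1) m, a i * d ^ (i - j) * (i.choose j : ℝ) :=
        Finset.sum_le_sum key
    _ ≤ a j * d ^ (j - j) * (j.choose j : ℝ) +
        ∑ i ∈ Finset.Icc (j+1) m, a i * d ^ (i - j) * (i.choose j : ℝ) := by
        have : 0 ≤ a j * d ^ (j - j) * (j.choose j : ℝ) := by
          have := hnonneg j (by omega)
          positivity
        linarith
    _ = ∑ i ∈ Finset.Icc j m, a i * d ^ (i - j) * (i.choose j : ℝ) := by
        rw [hsplit, Finset.sum_cons]
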